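/- Let E be a full additive Karoubian subcategory of an abelian category A. Then K^{∞,+}(E) = K^{+}(E) * K^{∞,b}(E), i.e., every unbounded complex of objects of E with left bounded cohomology is the middle term of a distinguished triangle in K(E) whose first term is (homotopy equivalent to) a left bounded complex and whose third term has bounded cohomology. -/

import Mathlib

open CategoryTheory Limits Pretriangulated Opposite

open ZeroObject

universe w v u

namespace St7

variable {A : Type u} [Category.{v} A] [Abelian A]

namespace Aux

variable (X : CochainComplex A ℤ) (N : ℤ)

/-- stupid truncation in degrees ≥ N -/
noncomputable def ge : CochainComplex A ℤ where
  X i := if N ≤ i then X.X i else 0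
  d i j :=
    if h : N ≤ i ∧ N ≤ j then
      eqToHom (if_pos h.1) ≫ X.d i j ≫ eqToHom (if_pos h.2).symm
    else 0
  shape i j hij := by
    by_cases h : N ≤ i ∧ N ≤ j
    · rw [dif_pos h, X.shape i j hij]; simp
    · rw [dif_neg h]
  d_comp_d' i j k _ _ := by
    by_cases h1 : N ≤ i ∧ N ≤ j
    · by_cases h2 : N ≤ j ∧ N ≤ k
      · rw [dif_pos h1, dif_pos h2]; simp
      · rw [dif_neg h2, comp_zero]
    · rw [dif_neg h1, zero_comp]

/-- stupid truncation in degrees < N -/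
noncomputable def lt : CochainComplex A ℤ where
  X i := if i < N then X.X i else 0
  d i j :=
    if h : i < N ∧ j < N then
      eqToHom (if_pos h.1) ≫ X.d i j ≫ eqToHom (if_pos h.2).symm
    else 0
  shape i j hij := by
    by_cases h : i < N ∧ j < N
    · rw [dif_pos h, X.shape i j hij]; simp
    · rw [dif_neg h]
  d_comp_d' i j k _ _ := by
    by_cases h1 : i < N ∧ j < N
    · by_cases h2 : j < N ∧ k < N
      · rw [dif_pos h1, dif_pos h2]; simp
      · rw [dif_neg h2, comp_zero]
    · rw [dif_neg h1, zero_comp]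

lemma ge_d (i j : ℤ) : (ge X N).d i j =
    if h : N ≤ i ∧ N ≤ j then
      eqToHom (if_pos h.1) ≫ X.d i j ≫ eqToHom (if_pos h.2).symm
    else 0 := rfl

lemma lt_d (i j : ℤ) : (lt X N).d i j =
    if h : i < N ∧ j < N then
      eqToHom (if_pos h.1) ≫ X.d i j ≫ eqToHom (if_pos h.2).symm
    else 0 := rfl

noncomputable def ι : ge X N ⟶ X where
  f i := if h : N ≤ i then eqToHom (if_pos h) else 0
  comm' i j hij := by
    obtain rfl : i + 1 = j := hij
    rw [ge_d]
    by_cases h : N ≤ i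
    · rw [dif_pos h, dif_pos (show N ≤ i + 1 by omega), dif_pos (show N ≤ i ∧ N ≤ i + 1 from ⟨h, by omega⟩)]
      erw [Category.assoc, Category.assoc, eqToHom_trans, eqToHom_refl, Category.comp_id]
      rfl
    · rw [dif_neg h, dif_neg (by tauto : ¬ (N ≤ i ∧ N ≤ i + 1))]
      exact (zero_comp (C := A)).trans (zero_comp (C := A)).symm

noncomputable def π : X ⟶ lt X N where
  f i := if h : i < N then eqToHom (if_pos h).symm else 0
  comm' i j hij := by
    obtain rfl : i + 1 = j := hij
    rw [lt_d]
    by_cases h : i + 1 < N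
    · rw [dif_pos h, dif_pos (show i < N by omega), dif_pos (show i < N ∧ i + 1 < N from ⟨by omega, h⟩)]
      erw [eqToHom_trans_assoc, eqToHom_refl, Category.id_comp]
      rfl
    · rw [dif_neg h, dif_neg (by tauto : ¬ (i < N ∧ i + 1 < N))]
      exact (comp_zero (C := A)).trans (comp_zero (C := A)).symm

noncomputable def S : ShortComplex (CochainComplex A ℤ) :=
  ShortComplex.mk (ι X N) (π X N) (by
    ext n
    dsimp [ι, π]
    by_cases h : N ≤ n
    · rw [dif_neg (by omega : ¬ n < N)]; simp
    · rw [dif_neg h]; simp)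

lemma ι_f (n : ℤ) : (ι X N).f n = if h : N ≤ n then eqToHom (if_pos h) else 0 := rfl

lemma π_f (n : ℤ) : (π X N).f n = if h : n < N then eqToHom (if_pos h).symm else 0 := rfl

noncomputable def σ (n : ℤ) :
    ((S X N).map (HomologicalComplex.eval A (ComplexShape.up ℤ) n)).Splitting where
  r := if h : N ≤ n then eqToHom (if_pos h).symm else 0
  s := if h : n < N then eqToHom (if_pos h) else 0
  f_r := by
    show (ι X N).f n ≫ _ = 𝟙 ((ge X N).X n)
    rw [ι_f]
    by_cases h : N ≤ n
    · rw [dif_pos h, dif_pos h]; erw [eqToHom_trans, eqToHom_refl]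
    · rw [dif_neg h, dif_neg h]
      have hz : IsZero (if N ≤ n then X.X n else 0) := by rw [if_neg h]; exact isZero_zero A
      exact hz.eq_of_src _ _
  s_g := by
    show _ ≫ (π X N).f n = 𝟙 ((lt X N).X n)
    rw [π_f]
    by_cases h : n < N
    · rw [dif_pos h, dif_pos h]; erw [eqToHom_trans, eqToHom_refl]
    · rw [dif_neg h, dif_neg h]
      have hz : IsZero (if n < N then X.X n else 0) := by rw [if_neg h]; exact isZero_zero A
      exact hz.eq_of_tgt _ _
  id := by
    show (_ ≫ (ι X N).f n : X.X n ⟶ X.X n) + ((π X N).f n ≫ _ : X.X n ⟶ X.X n) = 𝟙 (X.X n)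
    rw [ι_f, π_f]
    by_cases h : N ≤ n
    · rw [dif_pos h, dif_pos h, dif_neg (by omega : ¬ n < N)]
      erw [eqToHom_trans, eqToHom_refl, zero_comp, add_zero]
    · rw [dif_neg h, dif_pos (by omega : n < N), dif_pos (by omega : n < N)]
      erw [zero_comp, zero_add, eqToHom_trans, eqToHom_refl]

end Aux

theorem stmt7 (P : A → Prop)
    (hzero : ∀ Z : A, IsZero Z → P Z)
    (hsum : ∀ a b : A, P a → P b → P (a ⊞ b))
    (hkaroubi : ∀ ⦃a b : A⦄ (i : a ⟶ b) (r : b ⟶ a), i ≫ r = 𝟙 a → P b → P a)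
    (X : CochainComplex A ℤ) (hXP : ∀ i, P (X.X i))
    (hX : ∃ N : ℤ, ∀ i ≤ N, X.ExactAt i) :
    ∃ (Y Z : CochainComplex A ℤ),
      (∀ i, P (Y.X i)) ∧ (∃ N : ℤ, ∀ i < N, IsZero (Y.X i)) ∧
      (∀ i, P (Z.X i)) ∧ (∃ a b : ℤ, ∀ i, (i < a ∨ b < i) → Z.ExactAt i) ∧
      ∃ (f : (HomotopyCategory.quotient A (ComplexShape.up ℤ)).obj Y ⟶
          (HomotopyCategory.quotient A (ComplexShape.up ℤ)).obj X)
        (g : (HomotopyCategory.quotient A (ComplexShape.up ℤ)).obj X ⟶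
          (HomotopyCategory.quotient A (ComplexShape.up ℤ)).obj Z)
        (h : (HomotopyCategory.quotient A (ComplexShape.up ℤ)).obj Z ⟶
          ((HomotopyCategory.quotient A (ComplexShape.up ℤ)).obj Y)⟦(1 : ℤ)⟧),
        Triangle.mk f g h ∈ distTriang (HomotopyCategory A (ComplexShape.up ℤ)) := by
  obtain ⟨N, hN⟩ := hX
  refine ⟨Aux.ge X N, Aux.lt X N, ?_, ⟨N, ?_⟩, ?_, ⟨N - 1, N - 1, ?_⟩,
    (HomotopyCategory.quotient A (ComplexShape.up ℤ)).map (Aux.ι X N),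
    (HomotopyCategory.quotient A (ComplexShape.up ℤ)).map (Aux.π X N),
    (HomotopyCategory.quotient A (ComplexShape.up ℤ)).map
        (CochainComplex.homOfDegreewiseSplit (Aux.S X N) (Aux.σ X N)) ≫
      ((HomotopyCategory.quotient A (ComplexShape.up ℤ)).commShiftIso (1 : ℤ)).hom.app
        (Aux.ge X N), ?_⟩
  · intro i
    by_cases h : N ≤ i
    · show P (if N ≤ i then X.X i else 0); rw [if_pos h]; exact hXP i
    · show P (if N ≤ i then X.X i else 0); rw [if_neg h]; exact hzero _ (isZero_zero A)
  · intro i h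
    show IsZero (if N ≤ i then X.X i else 0)
    rw [if_neg (by omega)]; exact isZero_zero A
  · intro i
    by_cases h : i < N
    · show P (if i < N then X.X i else 0); rw [if_pos h]; exact hXP i
    · show P (if i < N then X.X i else 0); rw [if_neg h]; exact hzero _ (isZero_zero A)
  · intro i hi
    rcases hi with hi | hi
    · have hx := hN i (by omega)
      rw [X.exactAt_iff' (i-1) i (i+1) (by simp) (by simp)] at hx
      rw [(Aux.lt X N).exactAt_iff' (i-1) i (i+1) (by simp) (by simp)]
      refine (ShortComplex.exact_iff_of_iso ?_).1 hx
      refine ShortComplex.isoMk (eqToIso (if_pos (show i - 1 < N by omega)).symm)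
        (eqToIso (if_pos (show i < N by omega)).symm)
        (eqToIso (if_pos (show i + 1 < N by omega)).symm) ?_ ?_
      · show _ ≫ (Aux.lt X N).d (i - 1) i = _ ≫ _
        rw [Aux.lt_d, dif_pos (show i - 1 < N ∧ i < N from ⟨by omega, by omega⟩)]
        erw [eqToIso.hom, eqToHom_trans_assoc, eqToHom_refl, Category.id_comp]
        rfl
      · show _ ≫ (Aux.lt X N).d i (i + 1) = _ ≫ _
        rw [Aux.lt_d, dif_pos (show i < N ∧ i + 1 < N from ⟨by omega, by omega⟩)]
        erw [eqToIso.hom, eqToHom_trans_assoc, eqToHom_refl, Category.id_comp]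
        rfl
    · rw [HomologicalComplex.exactAt_iff]
      apply ShortComplex.exact_of_isZero_X₂
      show IsZero (if i < N then X.X i else 0)
      rw [if_neg (by omega)]; exact isZero_zero A
  · rw [HomotopyCategory.distinguished_iff_iso_trianglehOfDegreewiseSplit]
    exact ⟨Aux.S X N, Aux.σ X N, ⟨Iso.refl _⟩⟩

end St7
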